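/- For reflexive graphs G and H, the clique complex of the internal hom graph is isomorphic to the internal hom of the clique complexes: Cℓ(H^G) ≅ Cℓ(H)^{Cℓ(G)}. Explicitly, for vertex functions f_0,...,f_n : V(G) → V(H) (each a graph homomorphism vertex map), the set {f_0,...,f_n} is a simplex of Cℓ(H)^{Cℓ(G)} iff the f_i are pairwise adjacent in H^G. -/

import Mathlib

/-- An (abstract) simplicial complex: a vertex type together with a collection of
finite subsets (faces) closed under taking subsets. -/
structure Cpx : Type 1 where
  V : Type
  faces : Set (Set V)
  finite_mem : ∀ σ ∈ faces, σ.Finite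
  down : ∀ σ ∈ faces, ∀ τ ⊆ σ, τ ∈ faces

/-- A map of simplicial complexes: a vertex function sending faces to faces. -/
structure CpxHom (K L : Cpx) where
  f : K.V → L.V
  map_face : ∀ σ ∈ K.faces, f '' σ ∈ L.faces

/-- Composition of maps of simplicial complexes. -/
def CpxHom.comp {K L M : Cpx} (g : CpxHom L M) (h : CpxHom K L) : CpxHom K M where
  f := g.f ∘ h.f
  map_face := fun σ hσ => by
    rw [Set.image_comp]
    exact g.map_face _ (h.map_face _ hσ)

/-- The path complex `I_n` on vertices `{0, …, n}` with edges `{i, i+1}`. -/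
def pathCpx (n : ℕ) : Cpx where
  V := Fin (n + 1)
  faces := {σ | σ.Finite ∧ ∀ a ∈ σ, ∀ b ∈ σ, (a : ℕ) ≤ (b : ℕ) + 1}
  finite_mem := fun _ hσ => hσ.1
  down := fun σ hσ τ hτ => ⟨hσ.1.subset hτ, fun a ha b hb => hσ.2 a (hτ ha) b (hτ hb)⟩

/-- The product of simplicial complexes: a finite set is a face iff both projections
are faces. -/
def prodCpx (K L : Cpx) : Cpx where
  V := K.V × L.V
  faces := {S | S.Finite ∧ Prod.fst '' S ∈ K.faces ∧ Prod.snd '' S ∈ L.faces}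
  finite_mem := fun _ hS => hS.1
  down := fun S hS T hT =>
    ⟨hS.1.subset hT, K.down _ hS.2.1 _ (Set.image_mono hT),
      L.down _ hS.2.2 _ (Set.image_mono hT)⟩

/-- `f` and `g` are `n`-homotopic: there is a map `H : K × I_n → L` with
`H(-,0) = f` and `H(-,n) = g`. -/
def NHomotopic {K L : Cpx} (n : ℕ) (f g : CpxHom K L) : Prop :=
  ∃ H : CpxHom (prodCpx K (pathCpx n)) L,
    (∀ x : K.V, H.f (x, (0 : Fin (n + 1))) = f.f x) ∧
    (∀ x : K.V, H.f (x, Fin.last n) = g.f x)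

/-- `f` and `g` are `×`-homotopic: `n`-homotopic for some `n ≥ 1`. -/
def XHomotopic {K L : Cpx} (f g : CpxHom K L) : Prop :=
  ∃ n, 1 ≤ n ∧ NHomotopic n f g

/-- A reflexive graph: a symmetric, reflexive adjacency relation on a vertex
type. -/
structure RGraph where
  V : Type
  Adj : V → V → Prop
  symm : ∀ x y, Adj x y → Adj y x
  refl : ∀ x, Adj x x

/-- Adjacency in the internal hom graph `H^G`: `f` and `f'` are adjacent iff for
every edge `x y` of `G` (including loops), `f x` and `f' y` are adjacent in `H`. -/
def RGraph.homAdj (G H : RGraph) (f f' : G.V → H.V) : Prop :=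
  ∀ x y : G.V, G.Adj x y → H.Adj (f x) (f' y)

/-- The clique complex of a reflexive graph: faces are the finite sets of pairwise
adjacent vertices. -/
def cliqueCpx (G : RGraph) : Cpx where
  V := G.V
  faces := {σ | σ.Finite ∧ ∀ a ∈ σ, ∀ b ∈ σ, G.Adj a b}
  finite_mem := fun _ h => h.1
  down := fun σ hσ τ hτ => ⟨hσ.1.subset hτ, fun a ha b hb => hσ.2 a (hτ ha) b (hτ hb)⟩

/-- The internal hom of simplicial complexes `L^K`: vertices are all vertex
functions, and a finite set `S` of functions is a face iff for every listing
`x_0, …, x_n` of a face of `K` (vertices possibly repeated) and every choice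
`f_0, …, f_n` of elements of `S`, the set `{f_0 x_0, …, f_n x_n}` is a face of
`L`. -/
def ihomCpx (K L : Cpx) : Cpx where
  V := K.V → L.V
  faces := {S | S.Finite ∧ ∀ (n : ℕ) (xs : Fin (n + 1) → K.V)
      (fs : Fin (n + 1) → (K.V → L.V)),
      Set.range xs ∈ K.faces → (∀ i, fs i ∈ S) →
      Set.range (fun i => fs i (xs i)) ∈ L.faces}
  finite_mem := fun _ h => h.1
  down := fun S hS T hT =>
    ⟨hS.1.subset hT, fun n xs fs hxs hfs => hS.2 n xs fs hxs fun i => hT (hfs i)⟩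

/-- For reflexive graphs `G` and `H`, the clique complex of the internal hom graph
`H^G` agrees with the internal hom of the clique complexes: a set of vertex
functions is a face of `Cℓ(H)^{Cℓ(G)}` iff it is finite and its elements are
pairwise adjacent in `H^G`. -/
theorem cliqueCpx_ihom (G H : RGraph) (S : Set (G.V → H.V)) :
    S ∈ (ihomCpx (cliqueCpx G) (cliqueCpx H)).faces ↔
      (S.Finite ∧ ∀ f ∈ S, ∀ g ∈ S, RGraph.homAdj G H f g) := by
  constructor
  · rintro ⟨hfin, h⟩
    refine ⟨hfin, fun f hf g hg x y hxy => ?_⟩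
    have hface : Set.range (![x, y]) ∈ (cliqueCpx G).faces := by
      refine ⟨(Set.finite_range _), fun a ha b hb => ?_⟩
      obtain ⟨i, rfl⟩ := ha
      obtain ⟨j, rfl⟩ := hb
      fin_cases i <;> fin_cases j <;> simp [hxy, G.refl, G.symm _ _ hxy]
    have := h 1 ![x, y] ![f, g] hface (fun i => by fin_cases i <;> simpa)
    have hadj := this.2 (f x) ⟨0, rfl⟩ (g y) ⟨1, rfl⟩
    simpa using hadj
  · rintro ⟨hfin, h⟩
    refine ⟨hfin, fun n xs fs hxs hfs => ?_⟩
    refine ⟨Set.finite_range _, fun a ha b hb => ?_⟩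
    obtain ⟨i, rfl⟩ := ha
    obtain ⟨j, rfl⟩ := hb
    exact h (fs i) (hfs i) (fs j) (hfs j) (xs i) (xs j)
      (hxs.2 (xs i) ⟨i, rfl⟩ (xs j) ⟨j, rfl⟩)
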